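/- Let f : T̂_δ → ℝ be a nonnegative algebra morphism with f(s_δ,1)=1 and mean vector M_f ∈ Δ, and let Π_δ(f) = {γ ∈ Π_δ : f(e^γ,1) ≠ 0}. Then there exists a dominant face F of the weight polytope K(δ) such that Π_δ(f) = Π_δ ∩ F. -/

import Mathlib

open scoped RealInnerProductSpace

theorem aux_max_extreme {E : Type*} [NormedAddCommGroup E] [NormedSpace ℝ E]
    (s : Set E) (lam : E →ₗ[ℝ] ℝ) (c : ℝ)
    (hle : ∀ x ∈ s, lam x ≤ c) :
    IsExtreme ℝ s {x ∈ s | lam x = c} := by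
  constructor
  · exact fun x hx => hx.1
  · rintro x₁ hx₁ x₂ hx₂ x ⟨hxs, hxc⟩ hseg
    obtain ⟨a, b, ha, hb, hab, rfl⟩ := hseg
    have h1 : lam x₁ ≤ c := hle _ hx₁
    have h2 : lam x₂ ≤ c := hle _ hx₂
    have hx : a * lam x₁ + b * lam x₂ = c := by
      simpa [map_add, map_smul, smul_eq_mul] using hxc
    have habc : a * c + b * c = c := by rw [← add_mul, hab, one_mul]
    have e1 : lam x₁ = c := by
      by_contra h
      have hlt : lam x₁ < c := lt_of_le_of_ne h1 h
      linarith [mul_lt_mul_of_pos_left hlt ha, mul_le_mul_of_nonneg_left h2 hb.le]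
    have e2 : lam x₂ = c := by
      by_contra h
      have hlt : lam x₂ < c := lt_of_le_of_ne h2 h
      linarith [mul_lt_mul_of_pos_left hlt hb, mul_le_mul_of_nonneg_left h1 ha.le]
    exact ⟨hx₁, e1⟩


/-- Let `F` encode a nonnegative algebra morphism `f : T̂_δ → ℝ` with
`f(s_δ,1) = 1` and mean vector in the dominant chamber `Δ`, and let
`Π_δ(f) = {γ ∈ Π_δ : f(e^γ,1) ≠ 0}`.  Then there is a dominant face `F₀` of the weight
polytope `K(δ) = Conv(Π_δ)` such that `Π_δ(f) = Π_δ ∩ F₀`. -/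
theorem support_is_dominant_face
    (d : ℕ)
    (α : Fin d → EuclideanSpace ℝ (Fin d))
    (hα : LinearIndependent ℝ α)
    (Pδ : Finset (EuclideanSpace ℝ (Fin d)))
    (K : EuclideanSpace ℝ (Fin d) → ℕ)
    (δ : EuclideanSpace ℝ (Fin d)) (hδ : δ ∈ Pδ)
    (hKpos : ∀ γ ∈ Pδ, 0 < K γ)
    -- background facts on the weight system
    (hrefl : ∀ i, ∀ γ ∈ Pδ,
      (γ - (2 * ⟪γ, α i⟫ / ⟪α i, α i⟫) • α i) ∈ Pδ ∧
      K (γ - (2 * ⟪γ, α i⟫ / ⟪α i, α i⟫) • α i) = K γ)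
    (hstring : ∀ γ ∈ Pδ, ∀ i, 0 < ⟪γ, α i⟫ → γ - α i ∈ Pδ)
    (hchain : ∀ γ ∈ Pδ, ∃ (r : ℕ) (c : ℕ → EuclideanSpace ℝ (Fin d)),
      c 0 = γ ∧ c r = δ ∧ (∀ j ≤ r, c j ∈ Pδ) ∧ ∀ j < r, ∃ i, c (j + 1) - c j = α i)
    -- the morphism `f`, given through its values on monomials
    (F : EuclideanSpace ℝ (Fin d) → ℕ → ℝ)
    (hFmul : ∀ (n m : ℕ) (xs : Fin n → EuclideanSpace ℝ (Fin d))
      (ys : Fin m → EuclideanSpace ℝ (Fin d)),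
      (∀ j, xs j ∈ Pδ) → (∀ j, ys j ∈ Pδ) →
      F ((∑ j, xs j) + ∑ j, ys j) (n + m) = F (∑ j, xs j) n * F (∑ j, ys j) m)
    (hFnn : ∀ γ ∈ Pδ, 0 ≤ F γ 1)
    (hFnorm : ∑ γ ∈ Pδ, (K γ : ℝ) * F γ 1 = 1)
    (hmean : ∀ i, 0 ≤ ⟪α i, ∑ γ ∈ Pδ, (K γ : ℝ) • F γ 1 • γ⟫)
    -- assumed lemma: vanishing of `f` propagates down simple-root strings
    (hlem : ∀ i, ∀ γ ∈ Pδ, γ - α i ∈ Pδ → F γ 1 = 0 → F (γ - α i) 1 = 0) :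
    ∃ F₀ : Set (EuclideanSpace ℝ (Fin d)),
      Convex ℝ F₀ ∧
      IsExtreme ℝ (convexHull ℝ (↑Pδ : Set (EuclideanSpace ℝ (Fin d)))) F₀ ∧
      (∃ x ∈ F₀, ∀ i, 0 ≤ ⟪α i, x⟫) ∧
      ∀ γ ∈ Pδ, (F γ 1 ≠ 0 ↔ γ ∈ F₀) := by
  classical
  -- product formula for two weights
  have hF2 : ∀ x ∈ Pδ, ∀ y ∈ Pδ, F (x + y) 2 = F x 1 * F y 1 := by
    intro x hx y hy
    have := hFmul 1 1 (fun _ => x) (fun _ => y) (fun _ => hx) (fun _ => hy)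
    simpa using this
  -- upward propagation of non-vanishing
  have hup : ∀ i, ∀ γ ∈ Pδ, γ - α i ∈ Pδ → F (γ - α i) 1 ≠ 0 → F γ 1 ≠ 0 :=
    fun i γ hγ h1 h2 h0 => h2 (hlem i γ hγ h1 h0)
  -- the set of "active" simple roots
  set P : Fin d → Prop :=
    fun i => ∃ β, β ∈ Pδ ∧ F β 1 ≠ 0 ∧ β + α i ∈ Pδ ∧ F (β + α i) 1 ≠ 0 with hP
  -- downward propagation along active roots
  have hdown : ∀ i, P i → ∀ γ ∈ Pδ, F γ 1 ≠ 0 → γ - α i ∈ Pδ → F (γ - α i) 1 ≠ 0 := by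
    intro i ⟨β, hβ, hβ0, hβα, hβα0⟩ γ hγ hγ0 hγα
    have e1 : F ((γ - α i) + (β + α i)) 2 = F (γ - α i) 1 * F (β + α i) 1 :=
      hF2 _ hγα _ hβα
    have e2 : (γ - α i) + (β + α i) = γ + β := by abel
    have e3 : F (γ + β) 2 = F γ 1 * F β 1 := hF2 _ hγ _ hβ
    rw [e2, e3] at e1
    intro h0
    rw [h0, zero_mul] at e1
    exact mul_ne_zero hγ0 hβ0 e1
  -- nonvanishing at some weight
  have hsome : ∃ γ ∈ Pδ, F γ 1 ≠ 0 := by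
    by_contra h
    push_neg at h
    rw [Finset.sum_eq_zero (fun γ hγ => by rw [h γ hγ, mul_zero])] at hFnorm
    exact zero_ne_one hFnorm
  -- nonvanishing at the highest weight δ
  have hδ0 : F δ 1 ≠ 0 := by
    obtain ⟨γ₀, hγ₀, hγ₀0⟩ := hsome
    obtain ⟨r, c, hc0, hcr, hcP, hcs⟩ := hchain γ₀ hγ₀
    have key : ∀ j ≤ r, F (c j) 1 ≠ 0 := by
      intro j
      induction j with
      | zero => intro _; rw [hc0]; exact hγ₀0
      | succ k ih =>
        intro hk
        obtain ⟨i, hi⟩ := hcs k (by omega)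
        have hck : c k = c (k + 1) - α i := by rw [← hi]; abel
        exact hup i (c (k+1)) (hcP _ hk) (hck ▸ hcP _ (by omega))
          (hck ▸ ih (by omega))
    rw [← hcr]; exact key r le_rfl
  -- a linear functional vanishing exactly on the active roots
  have hexists : ∃ lam : EuclideanSpace ℝ (Fin d) →ₗ[ℝ] ℝ,
      ∀ i, lam (α i) = if P i then 0 else 1 := by
    rcases Nat.eq_zero_or_pos d with hd | hd
    · exact ⟨0, fun i => absurd i.isLt (by omega)⟩
    · haveI : Nonempty (Fin d) := ⟨⟨0, hd⟩⟩
      have hcard : Fintype.card (Fin d) = Module.finrank ℝ (EuclideanSpace ℝ (Fin d)) := by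
        simp
      let B := basisOfLinearIndependentOfCardEqFinrank hα hcard
      have hB : ∀ i, B i = α i := fun i =>
        congrFun (coe_basisOfLinearIndependentOfCardEqFinrank hα hcard) i
      refine ⟨∑ i ∈ Finset.univ.filter (fun i => ¬ P i), B.coord i, fun j => ?_⟩
      have : ∀ i, B.coord i (α j) = if j = i then 1 else 0 := by
        intro i
        rw [← hB j, Module.Basis.coord_apply, Module.Basis.repr_self, Finsupp.single_apply]
      simp only [LinearMap.coe_sum, Finset.sum_apply, this,
        Finset.sum_ite_eq, Finset.mem_filter, Finset.mem_univ, true_and]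
      by_cases h : P j <;> simp [h]
  obtain ⟨lam, hlam⟩ := hexists
  -- main dichotomy along chains
  have main : ∀ γ ∈ Pδ, lam γ ≤ lam δ ∧ (F γ 1 ≠ 0 ↔ lam γ = lam δ) := by
    intro γ hγ
    obtain ⟨r, c, hc0, hcr, hcP, hcs⟩ := hchain γ hγ
    choose idx hidx using hcs
    have tele : lam (c r) - lam (c 0) = ∑ j ∈ Finset.range r, (lam (c (j+1)) - lam (c j)) :=
      (Finset.sum_range_sub (fun j => lam (c j)) r).symm
    have step : ∀ j (h : j < r), lam (c (j+1)) - lam (c j) = if P (idx j h) then 0 else 1 := by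
      intro j h
      rw [← map_sub, hidx j h, hlam]
    have term_nonneg : ∀ j ∈ Finset.range r, 0 ≤ lam (c (j+1)) - lam (c j) := by
      intro j hj
      rw [step j (Finset.mem_range.mp hj)]
      split <;> norm_num
    have hsum_nonneg : 0 ≤ lam (c r) - lam (c 0) := by
      rw [tele]; exact Finset.sum_nonneg term_nonneg
    refine ⟨by rw [hc0, hcr] at hsum_nonneg; linarith, ?_, ?_⟩
    · -- F γ 1 ≠ 0 → lam γ = lam δ
      intro hγ0
      have key : ∀ j ≤ r, F (c j) 1 ≠ 0 := by
        intro j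
        induction j with
        | zero => intro _; rw [hc0]; exact hγ0
        | succ k ih =>
          intro hk
          have hlt : k < r := by omega
          have hck : c k = c (k + 1) - α (idx k hlt) := by rw [← hidx k hlt]; abel
          exact hup _ (c (k+1)) (hcP _ hk) (hck ▸ hcP k (by omega)) (hck ▸ ih (by omega))
      have hz : ∀ j ∈ Finset.range r, lam (c (j+1)) - lam (c j) = 0 := by
        intro j hj
        have hlt := Finset.mem_range.mp hj
        have e : c j + α (idx j hlt) = c (j+1) := by rw [← hidx j hlt]; abel
        rw [step j hlt, if_pos]
        exact ⟨c j, hcP j (by omega), key j (by omega),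
          by rw [e]; exact hcP (j+1) (by omega), by rw [e]; exact key (j+1) (by omega)⟩
      have hz0 : lam (c r) - lam (c 0) = 0 := by rw [tele]; exact Finset.sum_eq_zero hz
      rw [hc0, hcr] at hz0
      linarith
    · -- lam γ = lam δ → F γ 1 ≠ 0
      intro heq
      have hzero : lam (c r) - lam (c 0) = 0 := by rw [hc0, hcr, heq]; ring
      have hall : ∀ j ∈ Finset.range r, lam (c (j+1)) - lam (c j) = 0 := by
        rw [tele] at hzero
        exact (Finset.sum_eq_zero_iff_of_nonneg term_nonneg).mp hzero
      have hPstep : ∀ j (h : j < r), P (idx j h) := by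
        intro j h
        have h2 := hall j (Finset.mem_range.mpr h)
        rw [step j h] at h2
        by_contra hp
        rw [if_neg hp] at h2; norm_num at h2
      have key : ∀ k, k ≤ r → F (c (r - k)) 1 ≠ 0 := by
        intro k
        induction k with
        | zero => intro _; simpa [Nat.sub_zero, hcr] using hδ0
        | succ k ih =>
          intro hk
          have hj : r - (k+1) < r := by omega
          have hjj : r - (k+1) + 1 = r - k := by omega
          have e : c (r - (k+1)) = c (r - (k+1) + 1) - α (idx _ hj) := by
            rw [← hidx _ hj]; abel
          have h1 : F (c (r - (k+1) + 1)) 1 ≠ 0 := by rw [hjj]; exact ih (by omega)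
          have h2 : c (r - (k+1) + 1) ∈ Pδ := hcP _ (by omega)
          have h3 : c (r - (k+1)) ∈ Pδ := hcP _ (by omega)
          rw [e]
          exact hdown _ (hPstep _ hj) _ h2 h1 (e ▸ h3)
      have := key r le_rfl
      simpa [Nat.sub_self, hc0] using this
  have hle : ∀ γ ∈ Pδ, lam γ ≤ lam δ := fun γ hγ => (main γ hγ).1
  have hull_le : ∀ x ∈ convexHull ℝ (↑Pδ : Set (EuclideanSpace ℝ (Fin d))), lam x ≤ lam δ := by
    intro x hx
    have hsub : (↑Pδ : Set (EuclideanSpace ℝ (Fin d))) ⊆ {y | lam y ≤ lam δ} :=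
      fun γ hγ => hle γ (Finset.mem_coe.mp hγ)
    exact convexHull_min hsub (convex_halfSpace_le lam.isLinear (lam δ)) hx
  refine ⟨{x ∈ convexHull ℝ (↑Pδ : Set (EuclideanSpace ℝ (Fin d))) | lam x = lam δ},
    ?_, ?_, ?_, ?_⟩
  · exact (convex_convexHull ℝ _).inter (convex_hyperplane lam.isLinear (lam δ))
  · exact aux_max_extreme _ lam (lam δ) hull_le
  · -- the mean vector is a dominant point of the face
    set w : EuclideanSpace ℝ (Fin d) → ℝ := fun γ => (K γ : ℝ) * F γ 1 with hw
    have hw0 : ∀ γ ∈ Pδ, 0 ≤ w γ := fun γ hγ => mul_nonneg (Nat.cast_nonneg _) (hFnn γ hγ)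
    have hws : ∑ γ ∈ Pδ, w γ = 1 := hFnorm
    have hMw : ∑ γ ∈ Pδ, (K γ : ℝ) • F γ 1 • γ = ∑ γ ∈ Pδ, w γ • γ := by
      refine Finset.sum_congr rfl fun γ _ => ?_
      rw [smul_smul]
    have hMmem : ∑ γ ∈ Pδ, (K γ : ℝ) • F γ 1 • γ
        ∈ convexHull ℝ (↑Pδ : Set (EuclideanSpace ℝ (Fin d))) := by
      have hmem := Finset.centerMass_mem_convexHull Pδ hw0 (by rw [hws]; norm_num)
        (fun γ hγ => Finset.mem_coe.mpr hγ) (z := id)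
      rw [Finset.centerMass_eq_of_sum_1 _ _ hws] at hmem
      simpa [hMw] using hmem
    have hMlam : lam (∑ γ ∈ Pδ, (K γ : ℝ) • F γ 1 • γ) = lam δ := by
      rw [hMw, map_sum]
      have hterm : ∀ γ ∈ Pδ, lam (w γ • γ) = w γ * lam δ := by
        intro γ hγ
        rw [map_smul, smul_eq_mul]
        by_cases h0 : F γ 1 = 0
        · rw [hw]; simp [h0]
        · rw [(main γ hγ).2.mp h0]
      rw [Finset.sum_congr rfl hterm, ← Finset.sum_mul, hws, one_mul]
    exact ⟨∑ γ ∈ Pδ, (K γ : ℝ) • F γ 1 • γ, ⟨hMmem, hMlam⟩, hmean⟩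
  · intro γ hγ
    constructor
    · intro h0
      exact ⟨subset_convexHull ℝ _ (Finset.mem_coe.mpr hγ), (main γ hγ).2.mp h0⟩
    · intro hmem
      exact (main γ hγ).2.mpr hmem.2
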